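/- Let X be a real Banach space and Ω ⊊ X a convex domain. Then every closed j-ball B_j(x, r) = {y ∈ Ω : j_Ω(x, y) ≤ r}, for x ∈ Ω and r > 0, is a convex set. -/

import Mathlib

/-- The distance-ratio metric (j-metric) on a domain `Ω` of a Banach space:
`j_Ω(x,y) = log(1 + ‖x − y‖ / min(d(x), d(y)))` where `d(x) = dist(x, X ∖ Ω)`. -/
noncomputable def jDist {X : Type*} [NormedAddCommGroup X]
    (Ω : Set X) (x y : X) : ℝ :=
  Real.log (1 + ‖x - y‖ / min (Metric.infDist x Ωᶜ) (Metric.infDist y Ωᶜ))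

/-- Concavity of the distance to the complement, on a convex open set. -/
lemma infDist_compl_concave {X : Type*} [NormedAddCommGroup X] [NormedSpace ℝ X]
    (Ω : Set X) (hΩopen : IsOpen Ω) (hΩconv : Convex ℝ Ω) (hne : Ωᶜ.Nonempty)
    {a b : X} (ha : a ∈ Ω) (hb : b ∈ Ω) {θ μ : ℝ} (hθ : 0 ≤ θ) (hμ : 0 ≤ μ)
    (hsum : θ + μ = 1) :
    θ * Metric.infDist a Ωᶜ + μ * Metric.infDist b Ωᶜ
      ≤ Metric.infDist (θ • a + μ • b) Ωᶜ := by
  have hclosed : IsClosed Ωᶜ := hΩopen.isClosed_compl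
  have hda : 0 < Metric.infDist a Ωᶜ :=
    (hclosed.notMem_iff_infDist_pos hne).mp (by simpa using ha)
  have hdb : 0 < Metric.infDist b Ωᶜ :=
    (hclosed.notMem_iff_infDist_pos hne).mp (by simpa using hb)
  set da := Metric.infDist a Ωᶜ
  set db := Metric.infDist b Ωᶜ
  set s := θ * da + μ * db with hs
  have hspos : 0 < s := by
    have : min da db ≤ s := by
      calc min da db = (θ + μ) * min da db := by rw [hsum]; ring
        _ = θ * min da db + μ * min da db := by ring
        _ ≤ θ * da + μ * db := by
            gcongr
            · exact min_le_left _ _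
            · exact min_le_right _ _
    exact lt_of_lt_of_le (lt_min hda hdb) this
  -- the ball of radius s around the combination is inside Ω
  have hball : Metric.ball (θ • a + μ • b) s ⊆ Ω := by
    intro z hz
    set c := θ • a + μ • b
    set v := z - c with hv
    have hvnorm : ‖v‖ < s := by
      rw [Metric.mem_ball, dist_eq_norm] at hz
      simpa [hv] using hz
    set v₁ := (da / s) • v
    set v₂ := (db / s) • v
    have h1 : a + v₁ ∈ Ω := by
      apply Metric.ball_infDist_compl_subset
      rw [Metric.mem_ball, dist_eq_norm]
      have : ‖v₁‖ = (da / s) * ‖v‖ := by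
        rw [norm_smul, Real.norm_of_nonneg (div_pos hda hspos).le]
      rw [add_sub_cancel_left, this]
      calc (da / s) * ‖v‖ < (da / s) * s := by
            exact mul_lt_mul_of_pos_left hvnorm (div_pos hda hspos)
        _ = da := by field_simp
    have h2 : b + v₂ ∈ Ω := by
      apply Metric.ball_infDist_compl_subset
      rw [Metric.mem_ball, dist_eq_norm]
      have : ‖v₂‖ = (db / s) * ‖v‖ := by
        rw [norm_smul, Real.norm_of_nonneg (div_pos hdb hspos).le]
      rw [add_sub_cancel_left, this]
      calc (db / s) * ‖v‖ < (db / s) * s := by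
            exact mul_lt_mul_of_pos_left hvnorm (div_pos hdb hspos)
        _ = db := by field_simp
    have hz' : θ • (a + v₁) + μ • (b + v₂) = z := by
      have hcomb : θ • v₁ + μ • v₂ = v := by
        simp only [v₁, v₂, smul_smul]
        rw [← add_smul]
        have : θ * (da / s) + μ * (db / s) = 1 := by
          field_simp [hs]
          exact hs.symm
        rw [this, one_smul]
      calc θ • (a + v₁) + μ • (b + v₂)
          = (θ • a + μ • b) + (θ • v₁ + μ • v₂) := by
            simp only [smul_add]; abel
        _ = c + v := by rw [hcomb]
        _ = z := by simp [hv]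
    rw [← hz']
    exact hΩconv h1 h2 hθ hμ hsum
  -- conclude
  by_contra hcon
  push_neg at hcon
  obtain ⟨z, hzmem, hzlt⟩ := (Metric.infDist_lt_iff hne).mp hcon
  exact hzmem (hball (by rw [Metric.mem_ball, dist_comm]; exact hzlt))

/-- On a convex domain of a Banach space, every closed `j`-ball is convex. -/
theorem jBall_convex_of_convex_domain
    {X : Type*} [NormedAddCommGroup X] [NormedSpace ℝ X] [CompleteSpace X]
    (Ω : Set X) (hΩopen : IsOpen Ω) (hΩconn : IsConnected Ω) (hΩconv : Convex ℝ Ω)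
    (hΩproper : Ω ≠ Set.univ)
    (x : X) (hx : x ∈ Ω) (r : ℝ) (hr : 0 < r) :
    Convex ℝ {y ∈ Ω | jDist Ω x y ≤ r} := by
  have hne : Ωᶜ.Nonempty := Set.nonempty_compl.mpr hΩproper
  have hclosed : IsClosed Ωᶜ := hΩopen.isClosed_compl
  have dpos : ∀ y ∈ Ω, 0 < Metric.infDist y Ωᶜ := fun y hy =>
    (hclosed.notMem_iff_infDist_pos hne).mp (by simpa using hy)
  set c := Real.exp r - 1 with hc
  have hcpos : 0 < c := by
    have h1 : r + 1 ≤ Real.exp r := Real.add_one_le_exp r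
    simp only [hc]; linarith
  -- characterization of membership
  have key : ∀ y ∈ Ω, (jDist Ω x y ≤ r ↔
      ‖x - y‖ ≤ c * Metric.infDist x Ωᶜ ∧ ‖x - y‖ ≤ c * Metric.infDist y Ωᶜ) := by
    intro y hy
    have hm : 0 < min (Metric.infDist x Ωᶜ) (Metric.infDist y Ωᶜ) :=
      lt_min (dpos x hx) (dpos y hy)
    unfold jDist
    rw [Real.log_le_iff_le_exp (by positivity)]
    constructor
    · intro h
      have h' : ‖x - y‖ / min (Metric.infDist x Ωᶜ) (Metric.infDist y Ωᶜ) ≤ c := by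
        rw [hc]; linarith
      rw [div_le_iff₀ hm] at h'
      have h'' : ‖x - y‖ ≤ c * min (Metric.infDist x Ωᶜ) (Metric.infDist y Ωᶜ) := by
        linarith
      constructor
      · exact h''.trans (by gcongr; exact min_le_left _ _)
      · exact h''.trans (by gcongr; exact min_le_right _ _)
    · rintro ⟨h1, h2⟩
      have h'' : ‖x - y‖ ≤ c * min (Metric.infDist x Ωᶜ) (Metric.infDist y Ωᶜ) := by
        rcases min_cases (Metric.infDist x Ωᶜ) (Metric.infDist y Ωᶜ) with ⟨h, _⟩ | ⟨h, _⟩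
        · rw [h]; exact h1
        · rw [h]; exact h2
      have h3 : ‖x - y‖ / min (Metric.infDist x Ωᶜ) (Metric.infDist y Ωᶜ) ≤ c :=
        (div_le_iff₀ hm).mpr h''
      linarith
  rintro y₁ ⟨hy₁Ω, hy₁j⟩ y₂ ⟨hy₂Ω, hy₂j⟩ θ μ hθ hμ hsum
  obtain ⟨h1a, h1b⟩ := (key y₁ hy₁Ω).mp hy₁j
  obtain ⟨h2a, h2b⟩ := (key y₂ hy₂Ω).mp hy₂j
  have hyΩ : θ • y₁ + μ • y₂ ∈ Ω := hΩconv hy₁Ω hy₂Ω hθ hμ hsum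
  refine ⟨hyΩ, (key _ hyΩ).mpr ⟨?_, ?_⟩⟩
  all_goals
    have hnorm : ‖x - (θ • y₁ + μ • y₂)‖ ≤ θ * ‖x - y₁‖ + μ * ‖x - y₂‖ := by
      have hx' : θ • x + μ • x = x := by rw [← add_smul, hsum, one_smul]
      have heq : x - (θ • y₁ + μ • y₂) = θ • (x - y₁) + μ • (x - y₂) := by
        calc x - (θ • y₁ + μ • y₂) = (θ • x + μ • x) - (θ • y₁ + μ • y₂) := by rw [hx']
          _ = θ • (x - y₁) + μ • (x - y₂) := by rw [smul_sub, smul_sub]; abel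
      calc ‖x - (θ • y₁ + μ • y₂)‖ = ‖θ • (x - y₁) + μ • (x - y₂)‖ := by rw [heq]
        _ ≤ ‖θ • (x - y₁)‖ + ‖μ • (x - y₂)‖ := norm_add_le _ _
        _ = θ * ‖x - y₁‖ + μ * ‖x - y₂‖ := by
            rw [norm_smul, norm_smul, Real.norm_of_nonneg hθ, Real.norm_of_nonneg hμ]
  · calc ‖x - (θ • y₁ + μ • y₂)‖ ≤ θ * ‖x - y₁‖ + μ * ‖x - y₂‖ := hnorm
      _ ≤ θ * (c * Metric.infDist x Ωᶜ) + μ * (c * Metric.infDist x Ωᶜ) := by gcongr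
      _ = c * Metric.infDist x Ωᶜ := by rw [← add_mul, hsum, one_mul]
  · calc ‖x - (θ • y₁ + μ • y₂)‖ ≤ θ * ‖x - y₁‖ + μ * ‖x - y₂‖ := hnorm
      _ ≤ θ * (c * Metric.infDist y₁ Ωᶜ) + μ * (c * Metric.infDist y₂ Ωᶜ) := by gcongr
      _ = c * (θ * Metric.infDist y₁ Ωᶜ + μ * Metric.infDist y₂ Ωᶜ) := by ring
      _ ≤ c * Metric.infDist (θ • y₁ + μ • y₂) Ωᶜ := by
          gcongr
          exact infDist_compl_concave Ω hΩopen hΩconv hne hy₁Ω hy₂Ω hθ hμ hsum
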